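/- Let n ≥ 2, m ≥ 1 be integers, t ∈ ℝ, λ ∈ ℂ, and for ν = 2, …, n let P_ν : [0,1] → M_m(ℂ) be matrix functions with Lebesgue-integrable entries. Let C ∈ M_m(ℂ) be a Hermitian matrix, μ_s ∈ ℝ and v_s ∈ ℂ^m a unit vector with C v_s = μ_s v_s, and set Φ_{p,s,t}(x) = v_s e^{i(2πp+t)x} and μ_{p,s}(t) = (2πp + t)^n + μ_s (2πp + t)^{n−2}. Suppose Ψ : [0,1] → ℂ^m is (n−1) times continuously differentiable with Ψ^{(n−1)} absolutely continuous, satisfies Ψ^{(ν)}(1) = e^{it} Ψ^{(ν)}(0) for ν = 0, 1, …, n−1, and satisfies (−i)^n Ψ^{(n)}(x) + (−i)^{n−2} P₂(x) Ψ^{(n−2)}(x) + Σ_{ν=3}^n P_ν(x) Ψ^{(n−ν)}(x) = λ Ψ(x) for almost every x ∈ [0,1]. Then for every p ∈ ℤ: (λ − μ_{p,s}(t))(Ψ, Φ_{p,s,t}) = (−i)^{n−2} ((P₂ − C) Ψ^{(n−2)}, Φ_{p,s,t}) + Σ_{ν=3}^n (P_ν Ψ^{(n−ν)}, Φ_{p,s,t}).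 -/

import Mathlib

open Real MeasureTheory

open intervalIntegral Set


lemma stmt11_ederiv (ρ : ℝ) (x : ℝ) :
    HasDerivAt (fun y : ℝ => Complex.exp (-(Complex.I * ρ * y)))
      (-(Complex.I * ρ) * Complex.exp (-(Complex.I * ρ * x))) x := by
  have h1 : HasDerivAt (fun y : ℝ => -(Complex.I * ρ * y)) (-(Complex.I * ρ)) x := by
    have := (Complex.ofRealCLM.hasDerivAt (x := x)).const_mul (Complex.I * ρ)
    simpa using this.fun_neg
  simpa [mul_comm] using h1.cexp

lemma stmt11_ibp (ρ : ℝ) (u u' : ℝ → ℂ)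
    (hu : ContinuousOn u (Set.Icc 0 1))
    (hd : ∀ x ∈ Set.Ioo (0:ℝ) 1, HasDerivAt u (u' x) x)
    (hu' : ContinuousOn u' (Set.Icc 0 1))
    (hbd : Complex.exp (-(Complex.I * ρ * 1)) * u 1 = u 0) :
    ∫ x in (0:ℝ)..1, Complex.exp (-(Complex.I * ρ * x)) * u' x
      = (Complex.I * ρ) * ∫ x in (0:ℝ)..1, Complex.exp (-(Complex.I * ρ * x)) * u x := by
  set e : ℝ → ℂ := fun y => Complex.exp (-(Complex.I * ρ * y)) with he
  have hecont : Continuous e := by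
    apply Complex.continuous_exp.comp; continuity
  have hfd : ∀ x ∈ Set.Ioo (0:ℝ) 1,
      HasDerivAt (fun y => e y * u y) (e x * u' x + (-(Complex.I * ρ) * e x) * u x) x := by
    intro x hx
    have := (stmt11_ederiv ρ x).fun_mul (hd x hx)
    refine this.congr_deriv ?_
    simp only [he]; ring
  have hIcc : Set.uIcc (0:ℝ) 1 = Set.Icc 0 1 := Set.uIcc_of_le zero_le_one
  have hint1 : IntervalIntegrable (fun x => e x * u' x) volume 0 1 := by
    apply ContinuousOn.intervalIntegrable; rw [hIcc]
    exact (hecont.continuousOn).mul hu'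
  have hint2 : IntervalIntegrable (fun x => (-(Complex.I * ρ) * e x) * u x) volume 0 1 := by
    apply ContinuousOn.intervalIntegrable; rw [hIcc]
    exact ((continuous_const.mul hecont).continuousOn).mul hu
  have key : ∫ x in (0:ℝ)..1, (e x * u' x + (-(Complex.I * ρ) * e x) * u x)
      = e 1 * u 1 - e 0 * u 0 :=
    integral_eq_sub_of_hasDeriv_right_of_le zero_le_one ((hecont.continuousOn).mul hu)
      (fun x hx => (hfd x hx).hasDerivWithinAt) (hint1.add hint2)
  rw [intervalIntegral.integral_add hint1 hint2] at key
  have he0 : e 0 = 1 := by simp [he]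
  have hbd' : e 1 * u 1 = u 0 := by simpa [he] using hbd
  rw [hbd', he0, one_mul, sub_self] at key
  have h2 : ∫ x in (0:ℝ)..1, (-(Complex.I * ρ) * e x) * u x
      = -(Complex.I * ρ) * ∫ x in (0:ℝ)..1, e x * u x := by
    rw [← intervalIntegral.integral_const_mul]; congr 1; ext x; ring
  rw [h2] at key
  linear_combination key

lemma stmt11_ederiv' (ρ : ℝ) (x : ℝ) :
    HasDerivAt (fun y : ℝ => -Complex.exp (-(Complex.I * ρ * y)))
      ((Complex.I * ρ) * Complex.exp (-(Complex.I * ρ * x))) x := by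
  have h1 : HasDerivAt (fun y : ℝ => -(Complex.I * ρ * y)) (-(Complex.I * ρ)) x := by
    have := (Complex.ofRealCLM.hasDerivAt (x := x)).const_mul (Complex.I * ρ)
    simpa using this.fun_neg
  have := h1.cexp.fun_neg
  exact this.congr_deriv (by ring)

lemma stmt11_eint (ρ : ℝ) (y z : ℝ) :
    (Complex.I * ρ) * ∫ x in y..z, Complex.exp (-(Complex.I * ρ * x))
      = Complex.exp (-(Complex.I * ρ * y)) - Complex.exp (-(Complex.I * ρ * z)) := by
  have hecont : Continuous fun x : ℝ => Complex.exp (-(Complex.I * ρ * x)) := by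
    apply Complex.continuous_exp.comp; continuity
  have key := integral_eq_sub_of_hasDerivAt (f := fun x : ℝ => -Complex.exp (-(Complex.I * ρ * x)))
    (fun x _ => stmt11_ederiv' ρ x)
    (((continuous_const.mul hecont).continuousOn).intervalIntegrable (a := y) (b := z))
  rw [intervalIntegral.integral_const_mul] at key
  rw [key]; ring

lemma stmt11_ac (ρ : ℝ) (w : ℝ → ℂ) (hw : IntegrableOn w (Set.Icc 0 1)) (c : ℂ)
    (hbd : Complex.exp (-(Complex.I * ρ * 1)) * (c + ∫ y in (0:ℝ)..1, w y) = c) :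
    ∫ x in (0:ℝ)..1, Complex.exp (-(Complex.I * ρ * x)) * w x
      = (Complex.I * ρ) * ∫ x in (0:ℝ)..1,
          Complex.exp (-(Complex.I * ρ * x)) * (c + ∫ y in (0:ℝ)..x, w y) := by
  set e : ℝ → ℂ := fun y : ℝ => Complex.exp (-(Complex.I * ρ * y)) with he
  have hecont : Continuous e := by
    apply Complex.continuous_exp.comp; continuity
  set μ0 : Measure ℝ := volume.restrict (Set.Ioc 0 1) with hμ0
  have hw' : IntegrableOn w (Set.Ioc 0 1) := hw.mono_set Set.Ioc_subset_Icc_self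
  have hewInt : Integrable (fun x => e x * w x) μ0 := by
    refine Integrable.mono' hw'.norm ((hecont.aestronglyMeasurable).mul hw'.aestronglyMeasurable)
      (Filter.Eventually.of_forall fun x => ?_)
    rw [norm_mul]
    simp [he, Complex.norm_exp]
  -- the inner primitive
  set H : ℝ → ℂ := fun x => ∫ y in (0:ℝ)..x, w y with hH
  have hHcont : ContinuousOn H (Set.Icc 0 1) := by
    have := continuousOn_primitive (μ := volume) (f := w) (a := 0) (b := 1) hw
    apply this.congr
    intro x hx
    simp [hH, integral_of_le hx.1]
  -- Fubini setup
  set F : ℝ × ℝ → ℂ := fun z => if z.2 ≤ z.1 then e z.1 * w z.2 else 0 with hF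
  have hFmeas : AEStronglyMeasurable F (μ0.prod μ0) := by
    have hS : MeasurableSet {z : ℝ × ℝ | z.2 ≤ z.1} :=
      (isClosed_le continuous_snd continuous_fst).measurableSet
    have hf : AEStronglyMeasurable (fun z : ℝ × ℝ => e z.1 * w z.2) (μ0.prod μ0) :=
      ((hecont.aestronglyMeasurable).comp_fst).fun_mul (hw'.aestronglyMeasurable.comp_snd)
    have : F = Set.indicator {z : ℝ × ℝ | z.2 ≤ z.1} (fun z => e z.1 * w z.2) := by
      ext z; simp [hF, Set.indicator_apply]
    rw [this]
    exact hf.indicator hS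
  have hFint : Integrable F (μ0.prod μ0) := by
    have hdom : Integrable (fun z : ℝ × ℝ => (1:ℝ) * ‖w z.2‖) (μ0.prod μ0) :=
      (integrable_const (1:ℝ)).mul_prod hw'.norm
    refine Integrable.mono' hdom hFmeas (Filter.Eventually.of_forall fun z => ?_)
    by_cases h : z.2 ≤ z.1
    · simp only [hF, if_pos h]
      rw [norm_mul]
      simp [he, Complex.norm_exp]
    · simp [hF, if_neg h]
  have hswap := MeasureTheory.integral_integral_swap (μ := μ0) (ν := μ0)
    (f := fun x y => F (x, y)) hFint
  -- identify LHS of swap with T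
  have hinner1 : ∀ x ∈ Set.Ioc (0:ℝ) 1, (∫ y, F (x, y) ∂μ0) = e x * H x := by
    intro x hx
    have : (fun y => F (x, y)) = Set.indicator (Set.Iic x) (fun y => e x * w y) := by
      ext y; simp [hF, Set.indicator_apply]
    rw [this, MeasureTheory.integral_indicator measurableSet_Iic, hμ0,
      Measure.restrict_restrict measurableSet_Iic]
    have hset : Set.Iic x ∩ Set.Ioc 0 1 = Set.Ioc 0 x := by
      ext y
      simp only [Set.mem_inter_iff, Set.mem_Iic, Set.mem_Ioc]
      constructor
      · rintro ⟨h1, h2, h3⟩; exact ⟨h2, h1⟩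
      · rintro ⟨h1, h2⟩; exact ⟨h2, h1, h2.trans hx.2⟩
    rw [hset, MeasureTheory.integral_const_mul]
    congr 1
    exact (integral_of_le hx.1.le).symm
  have hinner2 : ∀ y ∈ Set.Ioc (0:ℝ) 1, (∫ x, F (x, y) ∂μ0)
      = (∫ x in y..1, e x) * w y := by
    intro y hy
    have : (fun x => F (x, y)) = Set.indicator (Set.Ici y) (fun x => e x * w y) := by
      ext x; simp [hF, Set.indicator_apply]
    rw [this, MeasureTheory.integral_indicator measurableSet_Ici, hμ0,
      Measure.restrict_restrict measurableSet_Ici]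
    have hset : Set.Ici y ∩ Set.Ioc 0 1 = Set.Icc y 1 := by
      ext x
      simp only [Set.mem_inter_iff, Set.mem_Ici, Set.mem_Ioc, Set.mem_Icc]
      constructor
      · rintro ⟨h1, _, h3⟩; exact ⟨h1, h3⟩
      · rintro ⟨h1, h2⟩; exact ⟨h1, hy.1.trans_le h1, h2⟩
    rw [hset, MeasureTheory.integral_Icc_eq_integral_Ioc, MeasureTheory.integral_mul_const,
      ← integral_of_le hy.2]
  -- compute T
  have hT : ∫ x in (0:ℝ)..1, e x * H x = ∫ y, (∫ x in y..1, e x) * w y ∂μ0 := by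
    rw [integral_of_le (zero_le_one' ℝ)]
    calc ∫ x in Set.Ioc (0:ℝ) 1, e x * H x
        = ∫ x, ∫ y, F (x, y) ∂μ0 ∂μ0 := by
          refine (setIntegral_congr_fun measurableSet_Ioc fun x hx => ?_).symm
          exact hinner1 x hx
      _ = ∫ y, ∫ x, F (x, y) ∂μ0 ∂μ0 := hswap
      _ = ∫ y, (∫ x in y..1, e x) * w y ∂μ0 :=
          setIntegral_congr_fun measurableSet_Ioc fun y hy => hinner2 y hy
  -- assemble
  have h1 : IntervalIntegrable (fun x => e x * c) volume 0 1 :=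
    ((hecont.mul continuous_const).continuousOn).intervalIntegrable
  have h2 : IntervalIntegrable (fun x => e x * H x) volume 0 1 := by
    apply ContinuousOn.intervalIntegrable
    rw [Set.uIcc_of_le zero_le_one]
    exact (hecont.continuousOn).mul hHcont
  have hsplit : ∫ x in (0:ℝ)..1, e x * (c + H x)
      = (∫ x in (0:ℝ)..1, e x * c) + ∫ x in (0:ℝ)..1, e x * H x := by
    rw [← intervalIntegral.integral_add h1 h2]
    congr 1; ext x; ring
  have hec : (Complex.I * ρ) * ∫ x in (0:ℝ)..1, e x * c = (1 - e 1) * c := by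
    rw [intervalIntegral.integral_mul_const, ← mul_assoc, stmt11_eint ρ 0 1]
    have : e 0 = 1 := by simp [he]
    rw [show ((0:ℝ):ℂ) = 0 by norm_num] at *
    simp only [he]
    norm_num
  have heT : (Complex.I * ρ) * ∫ x in (0:ℝ)..1, e x * H x
      = (∫ y, e y * w y ∂μ0) - e 1 * ∫ y in (0:ℝ)..1, w y := by
    rw [hT, ← MeasureTheory.integral_const_mul]
    have hcong : ∀ y, (Complex.I * ρ) * ((∫ x in y..1, e x) * w y) = e y * w y - e 1 * w y := by
      intro y
      rw [← mul_assoc, stmt11_eint ρ y 1]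
      ring
    rw [show (fun y => (Complex.I * ρ) * ((∫ x in y..1, e x) * w y))
        = fun y => e y * w y - e 1 * w y from funext hcong]
    rw [MeasureTheory.integral_sub hewInt (hw'.const_mul (e 1)),
      MeasureTheory.integral_const_mul, integral_of_le (zero_le_one' ℝ)]
  have hLHS : ∫ x in (0:ℝ)..1, e x * w x = ∫ y, e y * w y ∂μ0 :=
    integral_of_le (zero_le_one' ℝ)
  have hbd' : e 1 * (c + ∫ y in (0:ℝ)..1, w y) = c := by
    simpa [he] using hbd
  rw [hsplit, mul_add, hec, heT, hLHS]
  linear_combination hbd'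

lemma stmt11_int_mul {f z : ℝ → ℂ} (hf : IntegrableOn f (Set.Icc 0 1))
    (hz : ContinuousOn z (Set.Icc 0 1)) :
    IntegrableOn (fun x => f x * z x) (Set.Icc (0:ℝ) 1) := by
  obtain ⟨Cb, hCb⟩ := isCompact_Icc.exists_bound_of_continuousOn hz
  refine Integrable.mono' (hf.norm.const_mul Cb)
    (hf.aestronglyMeasurable.mul (hz.aestronglyMeasurable measurableSet_Icc)) ?_
  rw [ae_restrict_iff' measurableSet_Icc]
  refine Filter.Eventually.of_forall fun x hx => ?_
  rw [norm_mul, mul_comm]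
  exact mul_le_mul_of_nonneg_right (hCb x hx) (norm_nonneg _)

lemma stmt11_mul_int {f z : ℝ → ℂ} (hf : IntegrableOn f (Set.Icc 0 1))
    (hz : ContinuousOn z (Set.Icc 0 1)) :
    IntegrableOn (fun x => z x * f x) (Set.Icc (0:ℝ) 1) := by
  simpa [mul_comm] using stmt11_int_mul hf hz

set_option maxHeartbeats 1000000 in
/-- Let `n ≥ 2, m ≥ 1` be integers, `t ∈ ℝ`, `λ ∈ ℂ`, and for
`ν = 2, …, n` let `P_ν : [0,1] → M_m(ℂ)` be matrix functions with Lebesgue-integrable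
entries. Let `C ∈ M_m(ℂ)` be a Hermitian matrix, `μ ∈ ℝ` and `v ∈ ℂ^m` a unit vector
with `C v = μ v`, and set `Φ_{p,s,t}(x) = v e^{i(2πp+t)x}` and
`μ_{p,s}(t) = (2πp + t)^n + μ (2πp + t)^{n−2}`. Suppose `Ψ : [0,1] → ℂ^m` is `(n−1)`
times continuously differentiable with `Ψ^{(n−1)}` absolutely continuous (encoded:
`Ψ^{(n−1)}` is the indefinite integral of an integrable `g`, which plays the role
of `Ψ^{(n)}`), satisfies `Ψ^{(ν)}(1) = e^{it} Ψ^{(ν)}(0)` for `ν = 0, …, n−1`, and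
satisfies
`(−i)^n Ψ^{(n)}(x) + (−i)^{n−2} P₂(x) Ψ^{(n−2)}(x) + Σ_{ν=3}^n P_ν(x) Ψ^{(n−ν)}(x) = λ Ψ(x)`
for a.e. `x ∈ [0,1]`. Then for every `p ∈ ℤ`:
`(λ − μ_{p,s}(t))(Ψ, Φ_{p,s,t}) = (−i)^{n−2} ((P₂ − C) Ψ^{(n−2)}, Φ_{p,s,t}) + Σ_{ν=3}^n (P_ν Ψ^{(n−ν)}, Φ_{p,s,t})`. -/
theorem stmt_11 (n m : ℕ) (hn : 2 ≤ n) (hm : 1 ≤ m) (t : ℝ) (lam : ℂ)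
    (P : ℕ → ℝ → Matrix (Fin m) (Fin m) ℂ)
    (hP : ∀ ν ∈ Finset.Icc 2 n, ∀ i j : Fin m,
      IntegrableOn (fun x => P ν x i j) (Set.Icc (0:ℝ) 1))
    (C : Matrix (Fin m) (Fin m) ℂ) (hC : C.IsHermitian)
    (μ : ℝ) (v : Fin m → ℂ)
    (hv : ∑ q, ‖v q‖^2 = 1)
    (hCv : C.mulVec v = (μ : ℂ) • v)
    (Ψ : ℝ → Fin m → ℂ)
    (hΨ : ContDiffOn ℝ ((n-1 : ℕ) : ℕ∞) Ψ (Set.Icc 0 1))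
    (g : ℝ → Fin m → ℂ)
    (hg : IntegrableOn g (Set.Icc (0:ℝ) 1))
    (hAC : ∀ x ∈ Set.Icc (0:ℝ) 1, iteratedDerivWithin (n-1) Ψ (Set.Icc 0 1) x
        = iteratedDerivWithin (n-1) Ψ (Set.Icc 0 1) 0 + ∫ y in (0:ℝ)..x, g y)
    (hbc : ∀ ν < n, iteratedDerivWithin ν Ψ (Set.Icc 0 1) 1
        = Complex.exp (Complex.I * (t : ℂ)) • iteratedDerivWithin ν Ψ (Set.Icc 0 1) 0)
    (hode : ∀ᵐ x ∂(volume.restrict (Set.Icc (0:ℝ) 1)),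
        (-Complex.I)^n • g x
        + (-Complex.I)^(n-2) • (P 2 x).mulVec (iteratedDerivWithin (n-2) Ψ (Set.Icc 0 1) x)
        + ∑ ν ∈ Finset.Icc 3 n, (P ν x).mulVec (iteratedDerivWithin (n-ν) Ψ (Set.Icc 0 1) x)
        = lam • Ψ x) :
    ∀ p : ℤ,
      (lam - (((2*π*(p:ℝ) + t)^n + μ * (2*π*(p:ℝ) + t)^(n-2) : ℝ) : ℂ))
          * ∫ x in (0:ℝ)..1, (∑ q, Ψ x q * (starRingEnd ℂ) (v q))
              * (starRingEnd ℂ) (Complex.exp (Complex.I * ((2*π*(p:ℝ) + t : ℝ) : ℂ) * (x:ℂ)))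
        = (-Complex.I)^(n-2)
            * (∫ x in (0:ℝ)..1,
                (∑ q, (P 2 x - C).mulVec (iteratedDerivWithin (n-2) Ψ (Set.Icc 0 1) x) q
                    * (starRingEnd ℂ) (v q))
                  * (starRingEnd ℂ) (Complex.exp (Complex.I * ((2*π*(p:ℝ) + t : ℝ) : ℂ) * (x:ℂ))))
          + ∑ ν ∈ Finset.Icc 3 n,
              ∫ x in (0:ℝ)..1,
                (∑ q, (P ν x).mulVec (iteratedDerivWithin (n-ν) Ψ (Set.Icc 0 1) x) q
                    * (starRingEnd ℂ) (v q))
                  * (starRingEnd ℂ) (Complex.exp (Complex.I * ((2*π*(p:ℝ) + t : ℝ) : ℂ) * (x:ℂ))) := by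
  intro p
  set S : Set ℝ := Set.Icc (0:ℝ) 1 with hS
  set ρ : ℝ := 2*π*(p:ℝ) + t with hρ
  set L : (Fin m → ℂ) →L[ℂ] ℂ :=
    ∑ q, (starRingEnd ℂ) (v q) • ContinuousLinearMap.proj q with hL
  have hLapp : ∀ z : Fin m → ℂ, L z = ∑ q, z q * (starRingEnd ℂ) (v q) := by
    intro z
    simp [hL, ContinuousLinearMap.sum_apply, mul_comm]
  set e : ℝ → ℂ := fun x : ℝ => Complex.exp (-(Complex.I * ρ * x)) with he
  have hecont : Continuous e := by
    apply Complex.continuous_exp.comp; continuity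
  have hconj : ∀ x : ℝ, (starRingEnd ℂ) (Complex.exp (Complex.I * (ρ:ℂ) * (x:ℂ))) = e x := by
    intro x
    rw [he, ← Complex.exp_conj]
    congr 1
    simp [map_mul, Complex.conj_I, Complex.conj_ofReal]
  have hUD : UniqueDiffOn ℝ S := uniqueDiffOn_Icc zero_lt_one
  set u : ℕ → ℝ → ℂ := fun k x => L (iteratedDerivWithin k Ψ S x) with hu
  set J : ℕ → ℂ := fun k => ∫ x in (0:ℝ)..1, e x * u k x with hJ
  have hucont : ∀ k ≤ n-1, ContinuousOn (u k) S := by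
    intro k hk
    apply L.continuous.comp_continuousOn
    apply hΨ.continuousOn_iteratedDerivWithin _ hUD
    exact_mod_cast hk
  -- boundary scalar
  have hexp1 : e 1 * Complex.exp (Complex.I * (t:ℂ)) = 1 := by
    rw [he, ← Complex.exp_add]
    have : -(Complex.I * (ρ:ℝ) * (1:ℝ)) + Complex.I * (t:ℂ) = (-p : ℤ) * (2 * π * Complex.I) := by
      rw [hρ]; push_cast; ring
    rw [this, Complex.exp_int_mul_two_pi_mul_I]
  have hbdk : ∀ k, k < n → e 1 * u k 1 = u k 0 := by
    intro k hk
    rw [hu]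
    simp only []
    rw [hbc k hk, _root_.map_smul, smul_eq_mul, ← mul_assoc, hexp1, one_mul]
  -- derivative facts
  have hderivAt : ∀ k, k < n-1 → ∀ x ∈ Set.Ioo (0:ℝ) 1, HasDerivAt (u k) (u (k+1) x) x := by
    intro k hk x hx
    have hxS : x ∈ S := Set.Ioo_subset_Icc_self hx
    have hdiff : DifferentiableOn ℝ (iteratedDerivWithin k Ψ S) S := by
      apply hΨ.differentiableOn_iteratedDerivWithin _ hUD
      exact_mod_cast hk
    have h1 : HasDerivWithinAt (iteratedDerivWithin k Ψ S)
        (derivWithin (iteratedDerivWithin k Ψ S) S x) S x :=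
      (hdiff x hxS).hasDerivWithinAt
    have h2 : HasDerivAt (iteratedDerivWithin k Ψ S)
        (derivWithin (iteratedDerivWithin k Ψ S) S x) x :=
      h1.hasDerivAt (by rw [hS]; exact Icc_mem_nhds hx.1 hx.2)
    have h3 : derivWithin (iteratedDerivWithin k Ψ S) S x = iteratedDerivWithin (k+1) Ψ S x :=
      (congrFun iteratedDerivWithin_succ x).symm
    rw [h3] at h2
    exact (L.restrictScalars ℝ).hasFDerivAt.comp_hasDerivAt x h2
  have hJstep : ∀ k, k < n-1 → J (k+1) = (Complex.I * ρ) * J k := by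
    intro k hk
    rw [hJ]
    exact stmt11_ibp ρ (u k) (u (k+1))
      (hucont k (le_of_lt hk)) (hderivAt k hk) (hucont (k+1) hk)
      (hbdk k (lt_of_lt_of_le hk (Nat.sub_le n 1)))
  have hJk : ∀ k, k ≤ n-1 → J k = (Complex.I * ρ)^k * J 0 := by
    intro k
    induction k with
    | zero => intro _; simp
    | succ k ih =>
      intro hk
      have hk' : k < n - 1 := hk
      rw [hJstep k hk', ih (le_of_lt hk'), pow_succ]
      ring
  -- AC step
  set w : ℝ → ℂ := fun x => L (g x) with hw
  have hwint : IntegrableOn w S := L.integrable_comp hg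
  have hACs : ∀ x ∈ S, u (n-1) x = u (n-1) 0 + ∫ y in (0:ℝ)..x, w y := by
    intro x hx
    have hgx : IntervalIntegrable g volume 0 x := by
      have h1 : IntegrableOn g (Set.uIcc 0 x) := by
        apply hg.mono_set
        rw [Set.uIcc_of_le hx.1, hS]
        exact Set.Icc_subset_Icc_right hx.2
      exact h1.intervalIntegrable
    rw [hu]
    simp only []
    rw [hAC x hx, map_add, L.intervalIntegral_comp_comm hgx]
  have hbdlast : e 1 * (u (n-1) 0 + ∫ y in (0:ℝ)..1, w y) = u (n-1) 0 := by
    rw [← hACs 1 (by rw [hS]; exact Set.right_mem_Icc.2 zero_le_one)]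
    exact hbdk (n-1) (Nat.sub_lt (by omega) one_pos)
  have hJg : ∫ x in (0:ℝ)..1, e x * w x = (Complex.I * ρ)^n * J 0 := by
    have h1 := stmt11_ac ρ w hwint (u (n-1) 0) (by simpa [he] using hbdlast)
    have h2 : ∫ x in (0:ℝ)..1,
        Complex.exp (-(Complex.I * ρ * x)) * (u (n-1) 0 + ∫ y in (0:ℝ)..x, w y) = J (n-1) := by
      rw [hJ]
      apply intervalIntegral.integral_congr
      intro x hx
      rw [Set.uIcc_of_le zero_le_one] at hx
      show e x * (u (n-1) 0 + ∫ y in (0:ℝ)..x, w y) = e x * u (n-1) x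
      rw [← hACs x hx]
    rw [h2] at h1
    rw [hJk (n-1) le_rfl] at h1
    rw [show ∫ x in (0:ℝ)..1, e x * w x
      = ∫ x in (0:ℝ)..1, Complex.exp (-(Complex.I * ρ * x)) * w x from rfl, h1]
    rw [← mul_assoc, ← pow_succ']
    congr 2
    omega
  -- integrability of the potential terms
  have hgenc : ∀ k, k ≤ n-1 → ContinuousOn (iteratedDerivWithin k Ψ S) S := by
    intro k hk
    apply hΨ.continuousOn_iteratedDerivWithin _ hUD
    exact_mod_cast hk
  have hiterc : ∀ ν ∈ Finset.Icc 2 n, ContinuousOn (iteratedDerivWithin (n-ν) Ψ S) S := by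
    intro ν hν
    have hν' := (Finset.mem_Icc.mp hν).1
    exact hgenc (n-ν) (by omega)
  have hPint : ∀ ν ∈ Finset.Icc 2 n,
      IntegrableOn (fun x => L ((P ν x).mulVec (iteratedDerivWithin (n-ν) Ψ S x))) S := by
    intro ν hν
    have heq : (fun x => L ((P ν x).mulVec (iteratedDerivWithin (n-ν) Ψ S x)))
        = fun x => ∑ q, ∑ j, P ν x q j
            * (iteratedDerivWithin (n-ν) Ψ S x j * (starRingEnd ℂ) (v q)) := by
      funext x
      rw [hLapp]
      simp [Matrix.mulVec, dotProduct, Finset.sum_mul, mul_assoc]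
    rw [heq, hS]
    apply integrable_finset_sum
    intro q _
    apply integrable_finset_sum
    intro j _
    have hzj : ContinuousOn
        (fun x => iteratedDerivWithin (n-ν) Ψ S x j * (starRingEnd ℂ) (v q)) (Set.Icc 0 1) := by
      rw [← hS]
      exact ((continuous_apply j).comp_continuousOn (hiterc ν hν)).mul continuousOn_const
    exact stmt11_int_mul (by rw [← hS]; exact hP ν hν q j) hzj
  have hEPint : ∀ ν ∈ Finset.Icc 2 n,
      IntegrableOn (fun x => e x * L ((P ν x).mulVec (iteratedDerivWithin (n-ν) Ψ S x))) S := by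
    intro ν hν
    rw [hS]
    exact stmt11_mul_int (by rw [← hS]; exact hPint ν hν) hecont.continuousOn
  have hewint : IntegrableOn (fun x => e x * w x) S := by
    rw [hS]
    exact stmt11_mul_int (by rw [← hS]; exact hwint) hecont.continuousOn
  have heuint : ∀ k, k ≤ n-1 → IntegrableOn (fun x => e x * u k x) S :=
    fun k hk => ((hecont.continuousOn.mul (hucont k hk)).integrableOn_compact
      (by rw [hS]; exact isCompact_Icc))
  -- scalar a.e. ODE
  have hodeL : ∀ᵐ x ∂(volume.restrict S),
      (-Complex.I)^n * (e x * w x)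
      + (-Complex.I)^(n-2) * (e x * L ((P 2 x).mulVec (iteratedDerivWithin (n-2) Ψ S x)))
      + ∑ ν ∈ Finset.Icc 3 n, e x * L ((P ν x).mulVec (iteratedDerivWithin (n-ν) Ψ S x))
      = lam * (e x * u 0 x) := by
    filter_upwards [hode] with x hx
    have hLx := congrArg L hx
    rw [map_add, map_add, _root_.map_smul, _root_.map_smul, _root_.map_smul, map_sum] at hLx
    simp only [smul_eq_mul] at hLx
    have hu0 : u 0 x = L (Ψ x) := by rw [hu]; simp [iteratedDerivWithin_zero]
    rw [hu0, ← Finset.mul_sum]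
    linear_combination e x * hLx
  -- integrate the ODE
  set B : ℕ → ℂ := fun ν => ∫ x in (0:ℝ)..1,
    e x * L ((P ν x).mulVec (iteratedDerivWithin (n-ν) Ψ S x)) with hB
  have hconv : ∀ f : ℝ → ℂ, (∫ x in S, f x) = ∫ x in (0:ℝ)..1, f x := by
    intro f
    rw [hS, MeasureTheory.integral_Icc_eq_integral_Ioc, ← integral_of_le zero_le_one]
  have h2mem : (2:ℕ) ∈ Finset.Icc 2 n := Finset.mem_Icc.mpr ⟨le_rfl, hn⟩
  have hsub : ∀ ν ∈ Finset.Icc 3 n, ν ∈ Finset.Icc 2 n := by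
    intro ν hν
    have := Finset.mem_Icc.mp hν
    exact Finset.mem_Icc.mpr ⟨by omega, this.2⟩
  have hmain : (-Complex.I)^n * ((Complex.I * ρ)^n * J 0)
      + (-Complex.I)^(n-2) * B 2 + ∑ ν ∈ Finset.Icc 3 n, B ν = lam * J 0 := by
    have hI1 : Integrable (fun x => (-Complex.I)^n * (e x * w x)) (volume.restrict S) :=
      hewint.const_mul _
    have hI2 : Integrable (fun x => (-Complex.I)^(n-2)
        * (e x * L ((P 2 x).mulVec (iteratedDerivWithin (n-2) Ψ S x)))) (volume.restrict S) :=
      (hEPint 2 h2mem).const_mul _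
    have hI3 : Integrable (fun x => ∑ ν ∈ Finset.Icc 3 n,
        e x * L ((P ν x).mulVec (iteratedDerivWithin (n-ν) Ψ S x))) (volume.restrict S) :=
      integrable_finset_sum _ (fun ν hν => hEPint ν (hsub ν hν))
    have hI12 : Integrable (fun x => (-Complex.I)^n * (e x * w x) + (-Complex.I)^(n-2)
        * (e x * L ((P 2 x).mulVec (iteratedDerivWithin (n-2) Ψ S x)))) (volume.restrict S) :=
      hI1.add hI2
    have hint := MeasureTheory.integral_congr_ae hodeL
    rw [MeasureTheory.integral_add hI12 hI3,
      MeasureTheory.integral_add hI1 hI2,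
      MeasureTheory.integral_finset_sum _ (fun ν hν => hEPint ν (hsub ν hν)),
      MeasureTheory.integral_const_mul, MeasureTheory.integral_const_mul,
      MeasureTheory.integral_const_mul] at hint
    calc (-Complex.I)^n * ((Complex.I * ρ)^n * J 0)
        + (-Complex.I)^(n-2) * B 2 + ∑ ν ∈ Finset.Icc 3 n, B ν
        = (-Complex.I)^n * (∫ x in S, e x * w x)
          + (-Complex.I)^(n-2) * (∫ x in S, e x
              * L ((P 2 x).mulVec (iteratedDerivWithin (n-2) Ψ S x)))
          + ∑ ν ∈ Finset.Icc 3 n, ∫ x in S, e x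
              * L ((P ν x).mulVec (iteratedDerivWithin (n-ν) Ψ S x)) := by
          rw [← hJg]
          congr 1
          · congr 1
            · rw [hconv]
            · rw [hB, hconv]
          · apply Finset.sum_congr rfl
            intro ν _
            rw [hB, hconv]
      _ = lam * ∫ x in S, e x * u 0 x := hint
      _ = lam * J 0 := by rw [hconv, hJ]
  -- C-term
  have hCterm : ∀ z : Fin m → ℂ, L (C.mulVec z) = (μ:ℂ) * L z := by
    intro z
    have key : ∀ j, ∑ q, C q j * (starRingEnd ℂ) (v q) = (μ:ℂ) * (starRingEnd ℂ) (v j) := by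
      intro j
      have h2 : ∑ q, (starRingEnd ℂ) (C q j) * v q = (C.mulVec v) j := by
        conv_rhs => rw [← hC]
        simp [Matrix.mulVec, dotProduct, Matrix.conjTranspose_apply]
      have h4 : (C.mulVec v) j = (μ:ℂ) * v j := by
        rw [congrFun hCv j]; simp
      calc ∑ q, C q j * (starRingEnd ℂ) (v q)
          = (starRingEnd ℂ) (∑ q, (starRingEnd ℂ) (C q j) * v q) := by
            rw [map_sum]
            apply Finset.sum_congr rfl
            intro q _
            simp [map_mul]
        _ = (starRingEnd ℂ) ((C.mulVec v) j) := by rw [h2]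
        _ = (μ:ℂ) * (starRingEnd ℂ) (v j) := by rw [h4, map_mul, Complex.conj_ofReal]
    rw [hLapp, hLapp]
    calc ∑ q, (C.mulVec z) q * (starRingEnd ℂ) (v q)
        = ∑ q, ∑ j, z j * (C q j * (starRingEnd ℂ) (v q)) := by
          apply Finset.sum_congr rfl
          intro q _
          rw [Matrix.mulVec, dotProduct, Finset.sum_mul]
          apply Finset.sum_congr rfl
          intro j _
          ring
      _ = ∑ j, z j * ∑ q, C q j * (starRingEnd ℂ) (v q) := by
          rw [Finset.sum_comm]
          apply Finset.sum_congr rfl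
          intro j _
          rw [Finset.mul_sum]
      _ = (μ:ℂ) * ∑ j, z j * (starRingEnd ℂ) (v j) := by
          rw [Finset.mul_sum]
          apply Finset.sum_congr rfl
          intro j _
          rw [key j]
          ring
  -- rewrite the goal integrals
  have hii : ∀ f : ℝ → ℂ, IntegrableOn f S → IntervalIntegrable f volume 0 1 := by
    intro f h
    apply IntegrableOn.intervalIntegrable
    rw [Set.uIcc_of_le zero_le_one, ← hS]
    exact h
  have hgoal0 : ∫ x in (0:ℝ)..1, (∑ q, Ψ x q * (starRingEnd ℂ) (v q))
      * (starRingEnd ℂ) (Complex.exp (Complex.I * ((ρ:ℝ):ℂ) * (x:ℂ))) = J 0 := by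
    rw [hJ]
    apply intervalIntegral.integral_congr
    intro x _
    show (∑ q, Ψ x q * (starRingEnd ℂ) (v q))
        * (starRingEnd ℂ) (Complex.exp (Complex.I * ((ρ:ℝ):ℂ) * (x:ℂ))) = e x * u 0 x
    have h0 : u 0 x = ∑ q, Ψ x q * (starRingEnd ℂ) (v q) := by
      rw [hu]
      show L (iteratedDerivWithin 0 Ψ S x) = _
      rw [hLapp]
      simp [iteratedDerivWithin_zero]
    rw [h0, hconj]
    ring
  have hgoalnu : ∀ ν ∈ Finset.Icc 3 n,
      (∫ x in (0:ℝ)..1, (∑ q, (P ν x).mulVec (iteratedDerivWithin (n-ν) Ψ S x) q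
          * (starRingEnd ℂ) (v q))
        * (starRingEnd ℂ) (Complex.exp (Complex.I * ((ρ:ℝ):ℂ) * (x:ℂ)))) = B ν := by
    intro ν _
    rw [hB]
    apply intervalIntegral.integral_congr
    intro x _
    show (∑ q, (P ν x).mulVec (iteratedDerivWithin (n-ν) Ψ S x) q * (starRingEnd ℂ) (v q))
        * (starRingEnd ℂ) (Complex.exp (Complex.I * ((ρ:ℝ):ℂ) * (x:ℂ)))
        = e x * L ((P ν x).mulVec (iteratedDerivWithin (n-ν) Ψ S x))
    rw [hconj, hLapp]
    ring
  have hgoal2 : (∫ x in (0:ℝ)..1, (∑ q, (P 2 x - C).mulVec (iteratedDerivWithin (n-2) Ψ S x) q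
          * (starRingEnd ℂ) (v q))
        * (starRingEnd ℂ) (Complex.exp (Complex.I * ((ρ:ℝ):ℂ) * (x:ℂ))))
      = B 2 - (μ:ℂ) * ((Complex.I * (ρ:ℂ))^(n-2) * J 0) := by
    have hptw : ∀ x : ℝ, (∑ q, (P 2 x - C).mulVec (iteratedDerivWithin (n-2) Ψ S x) q
          * (starRingEnd ℂ) (v q))
        * (starRingEnd ℂ) (Complex.exp (Complex.I * ((ρ:ℝ):ℂ) * (x:ℂ)))
        = e x * L ((P 2 x).mulVec (iteratedDerivWithin (n-2) Ψ S x))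
          - (μ:ℂ) * (e x * u (n-2) x) := by
      intro x
      rw [hconj, ← hLapp]
      rw [Matrix.sub_mulVec, map_sub, hCterm]
      have : u (n-2) x = L (iteratedDerivWithin (n-2) Ψ S x) := by rw [hu]
      rw [this]
      ring
    rw [intervalIntegral.integral_congr (g := fun x =>
        e x * L ((P 2 x).mulVec (iteratedDerivWithin (n-2) Ψ S x))
          - (μ:ℂ) * (e x * u (n-2) x)) (fun x _ => hptw x)]
    rw [intervalIntegral.integral_sub (hii _ (hEPint 2 h2mem))
      (((hii _ (heuint (n-2) (by omega)))).const_mul _)]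
    rw [intervalIntegral.integral_const_mul, hB]
    congr 2
    exact hJk (n-2) (by omega)
  -- final assembly
  have hpow1 : (-Complex.I)^n * (Complex.I * (ρ:ℂ))^n = ((ρ:ℝ):ℂ)^n := by
    rw [← mul_pow]
    congr 1
    linear_combination (-((ρ:ℝ):ℂ)) * Complex.I_mul_I
  have hpow2 : (-Complex.I)^(n-2) * (Complex.I * (ρ:ℂ))^(n-2) = ((ρ:ℝ):ℂ)^(n-2) := by
    rw [← mul_pow]
    congr 1
    linear_combination (-((ρ:ℝ):ℂ)) * Complex.I_mul_I
  have hcast : (((ρ^n + μ * ρ^(n-2)) : ℝ) : ℂ) = ((ρ:ℝ):ℂ)^n + (μ:ℂ) * ((ρ:ℝ):ℂ)^(n-2) := by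
    push_cast
    ring
  rw [hgoal0, hgoal2, Finset.sum_congr rfl hgoalnu, hcast]
  linear_combination (-1 : ℂ) * hmain + J 0 * hpow1 + (μ:ℂ) * J 0 * hpow2
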